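/- Let 0 < α < 1 and θ ∈ (0, π). Then −1/((1−e^{−iθ})^α (e^{−iθ}−e^{iθ}) e^{−i(m+1)θ}) − 1/((1−e^{iθ})^α (e^{iθ}−e^{−iθ}) e^{i(m+1)θ}) = (sin^α(θ/2) / (sin θ · (1−cos θ)^α)) · sin((m+1)θ + α(θ−π)/2), where the power w^α uses the principal branch. -/

import Mathlib

open Real Complex

theorem one_sub_exp_aux (θ : ℝ) (h1 : 0 < θ) (h2 : θ < π) :
    1 - Complex.exp (Complex.I*θ) = Complex.exp ((Real.log (2*Real.sin (θ/2)) : ℂ) + ((θ-π)/2 : ℝ)*Complex.I) := by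
  have hs : 0 < Real.sin (θ/2) := Real.sin_pos_of_pos_of_lt_pi (by linarith) (by linarith [Real.pi_pos])
  have hc : Real.cos ((θ-π)/2) = Real.sin (θ/2) := by
    rw [show (θ-π)/2 = θ/2 - π/2 by ring, Real.cos_sub_pi_div_two]
  have hsn : Real.sin ((θ-π)/2) = -Real.cos (θ/2) := by
    rw [show (θ-π)/2 = θ/2 - π/2 by ring, Real.sin_sub_pi_div_two]
  have hsinθ : Real.sin θ = 2*Real.sin (θ/2)*Real.cos (θ/2) := by
    have := Real.sin_two_mul (θ/2); rw [show 2*(θ/2) = θ by ring] at this; linarith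
  have hcosθ : Real.cos θ = 1 - 2*Real.sin (θ/2)^2 := by
    have := Real.cos_two_mul (θ/2); rw [show 2*(θ/2) = θ by ring] at this
    nlinarith [Real.sin_sq_add_cos_sq (θ/2)]
  rw [Complex.exp_add, ← Complex.ofReal_exp, Real.exp_log (by linarith),
    mul_comm Complex.I (θ:ℂ), Complex.exp_mul_I, Complex.exp_mul_I,
    ← Complex.ofReal_cos, ← Complex.ofReal_sin, ← Complex.ofReal_cos, ← Complex.ofReal_sin,
    hc, hsn, hsinθ, hcosθ]
  push_cast
  ring

theorem one_sub_exp_aux' (θ : ℝ) (h1 : 0 < θ) (h2 : θ < π) :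
    1 - Complex.exp (-(Complex.I*θ)) = Complex.exp ((Real.log (2*Real.sin (θ/2)) : ℂ) - ((θ-π)/2 : ℝ)*Complex.I) := by
  have h := congrArg (starRingEnd ℂ) (one_sub_exp_aux θ h1 h2)
  simp only [map_sub, map_one, map_add, map_mul, ← Complex.exp_conj, Complex.conj_I, Complex.conj_ofReal] at h
  rw [show -(Complex.I*(θ:ℂ)) = -Complex.I * (θ:ℂ) by ring,
    show (Real.log (2*Real.sin (θ/2)) : ℂ) - ((θ-π)/2 : ℝ)*Complex.I
      = (Real.log (2*Real.sin (θ/2)) : ℂ) + ((θ-π)/2 : ℝ)*(-Complex.I) by ring]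
  exact h

theorem cpow_aux (α θ : ℝ) (h1 : 0 < θ) (h2 : θ < π) :
    (1 - Complex.exp (Complex.I*θ)) ^ (α:ℂ)
      = Complex.exp (((α * Real.log (2*Real.sin (θ/2)) : ℝ) : ℂ) + ((α*(θ-π)/2 : ℝ):ℂ)*Complex.I) := by
  rw [one_sub_exp_aux θ h1 h2, Complex.cpow_def_of_ne_zero (Complex.exp_ne_zero _),
    Complex.log_exp (by simp; linarith [Real.pi_pos]) (by simp; linarith [Real.pi_pos]), mul_comm]
  congr 1
  push_cast
  ring

theorem cpow_aux' (α θ : ℝ) (h1 : 0 < θ) (h2 : θ < π) :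
    (1 - Complex.exp (-(Complex.I*θ))) ^ (α:ℂ)
      = Complex.exp (((α * Real.log (2*Real.sin (θ/2)) : ℝ) : ℂ) - ((α*(θ-π)/2 : ℝ):ℂ)*Complex.I) := by
  have hb : -π < -((θ-π)/2) ∧ -((θ-π)/2) ≤ π := by constructor <;> [linarith [Real.pi_pos]; linarith [Real.pi_pos]]
  rw [one_sub_exp_aux' θ h1 h2, Complex.cpow_def_of_ne_zero (Complex.exp_ne_zero _),
    show (Real.log (2*Real.sin (θ/2)) : ℂ) - ((θ-π)/2 : ℝ)*Complex.I
      = (Real.log (2*Real.sin (θ/2)) : ℂ) + (-((θ-π)/2) : ℝ)*Complex.I by push_cast; ring,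
    Complex.log_exp (by simp; linarith [Real.pi_pos]) (by simp; linarith [Real.pi_pos]), mul_comm]
  congr 1
  push_cast
  ring

theorem two_I_sin (x : ℝ) : Complex.exp (Complex.I*x) - Complex.exp (-(Complex.I*x)) = 2*Complex.I*(Real.sin x : ℂ) := by
  rw [Complex.ofReal_sin, Complex.sin,
    show (-(x:ℂ))*Complex.I = -(Complex.I*(x:ℂ)) by ring, show (x:ℂ)*Complex.I = Complex.I*(x:ℂ) by ring]
  have h := Complex.I_mul_I
  linear_combination (Complex.exp (Complex.I*(x:ℂ)) - Complex.exp (-(Complex.I*(x:ℂ)))) * h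

theorem core (a b T θ : ℝ) (hθ : Real.sin θ ≠ 0) :
    -(1/(Complex.exp ((a:ℂ) - (b:ℝ)*Complex.I) * (Complex.exp (-(Complex.I*θ)) - Complex.exp (Complex.I*θ)) * Complex.exp (-(Complex.I*T))))
      - 1/(Complex.exp ((a:ℂ) + (b:ℝ)*Complex.I) * (Complex.exp (Complex.I*θ) - Complex.exp (-(Complex.I*θ))) * Complex.exp (Complex.I*T))
      = (Real.exp (-a) : ℂ) * (Real.sin (T + b) : ℂ) / (Real.sin θ : ℂ) := by
  have h1 := two_I_sin θ
  have h2 := two_I_sin (T + b)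
  have hsC : (Real.sin θ : ℂ) ≠ 0 := by exact_mod_cast hθ
  rw [show Complex.exp (-(Complex.I*(θ:ℂ))) - Complex.exp (Complex.I*(θ:ℂ))
      = -(Complex.exp (Complex.I*(θ:ℂ)) - Complex.exp (-(Complex.I*(θ:ℂ)))) by ring, h1]
  have key : ∀ (u v : ℂ), 1/(Complex.exp u * (2*Complex.I*(Real.sin θ:ℂ)) * Complex.exp v)
      = Complex.exp (-u-v) * (2*Complex.I*(Real.sin θ:ℂ))⁻¹ := by
    intro u v
    rw [show (-u-v) = -(u+v) by ring, Complex.exp_neg, Complex.exp_add]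
    field_simp [Complex.exp_ne_zero]
  rw [show Complex.exp ((a:ℂ) - (b:ℝ)*Complex.I) * -(2*Complex.I*(Real.sin θ:ℂ)) * Complex.exp (-(Complex.I*(T:ℂ)))
      = -(Complex.exp ((a:ℂ) - (b:ℝ)*Complex.I) * (2*Complex.I*(Real.sin θ:ℂ)) * Complex.exp (-(Complex.I*(T:ℂ)))) by ring,
    one_div_neg_eq_neg_one_div, key, key,
    show (-((a:ℂ) - (b:ℝ)*Complex.I) - -(Complex.I*(T:ℂ))) = (-a:ℂ) + Complex.I*((T:ℂ)+(b:ℝ)) by push_cast; ring,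
    show (-((a:ℂ) + (b:ℝ)*Complex.I) - Complex.I*(T:ℂ)) = (-a:ℂ) + -(Complex.I*((T:ℂ)+(b:ℝ))) by push_cast; ring,
    Complex.exp_add, Complex.exp_add]
  push_cast at h2 ⊢
  have hsθ : Complex.sin (θ:ℂ) ≠ 0 := by rw [← Complex.ofReal_sin]; exact hsC
  field_simp [hsθ, Complex.I_ne_zero]
  linear_combination h2

theorem real_coeff (α θ : ℝ) (h1 : 0 < θ) (h2 : θ < π) :
    Real.sin (θ/2)^α / (1 - Real.cos θ)^α = Real.exp (-(α * Real.log (2*Real.sin (θ/2)))) := by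
  have hs : 0 < Real.sin (θ/2) := Real.sin_pos_of_pos_of_lt_pi (by linarith) (by linarith [Real.pi_pos])
  have h1c : 1 - Real.cos θ = 2*Real.sin (θ/2)*Real.sin (θ/2) := by
    have := Real.cos_two_mul (θ/2); rw [show 2*(θ/2) = θ by ring] at this
    nlinarith [Real.sin_sq_add_cos_sq (θ/2)]
  rw [h1c, show (2:ℝ)*Real.sin (θ/2)*Real.sin (θ/2) = (2*Real.sin (θ/2))*Real.sin (θ/2) by ring,
    Real.mul_rpow (by linarith) hs.le,
    show -(α * Real.log (2*Real.sin (θ/2))) = -(Real.log (2*Real.sin (θ/2)) * α) by ring,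
    Real.exp_neg, ← Real.rpow_def_of_pos (by linarith : (0:ℝ) < 2*Real.sin (θ/2))]
  rw [div_eq_iff (by positivity), inv_mul_eq_div, eq_div_iff (by positivity : (0:ℝ) < (2*Real.sin (θ/2))^α).ne']
  ring

theorem residue_sum_formula (α θ : ℝ) (hα : 0 < α ∧ α < 1) (hθ : θ ∈ Set.Ioo 0 π) (m : ℕ) :
    -(1 / ((1 - Complex.exp (-(Complex.I * θ))) ^ (α : ℂ)
          * (Complex.exp (-(Complex.I * θ)) - Complex.exp (Complex.I * θ))
          * Complex.exp (-(Complex.I * ((m + 1) * θ)))))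
      - 1 / ((1 - Complex.exp (Complex.I * θ)) ^ (α : ℂ)
          * (Complex.exp (Complex.I * θ) - Complex.exp (-(Complex.I * θ)))
          * Complex.exp (Complex.I * ((m + 1) * θ)))
      = ((Real.sin (θ / 2) ^ α / (Real.sin θ * (1 - Real.cos θ) ^ α)
          * Real.sin ((m + 1) * θ + α * (θ - π) / 2) : ℝ) : ℂ) := by
  obtain ⟨h1, h2⟩ := hθ
  have hsinθ : 0 < Real.sin θ := Real.sin_pos_of_pos_of_lt_pi h1 h2
  have hT : ((m:ℂ) + 1) * (θ:ℂ) = (((m:ℝ) + 1) * θ : ℝ) := by push_cast; ring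
  rw [cpow_aux α θ h1 h2, cpow_aux' α θ h1 h2, hT,
    show (α*(θ-π)/2 : ℝ) = (α*((θ-π)/2) : ℝ) by ring,
    core (α * Real.log (2*Real.sin (θ/2))) (α*((θ-π)/2)) (((m:ℝ)+1)*θ) θ hsinθ.ne']
  push_cast
  have h1c : 1 - Real.cos θ = 2*Real.sin (θ/2)^2 := by
    have := Real.cos_two_mul (θ/2); rw [show 2*(θ/2) = θ by ring] at this
    nlinarith [Real.sin_sq_add_cos_sq (θ/2)]
  have hs2 : 0 < Real.sin (θ/2) := Real.sin_pos_of_pos_of_lt_pi (by linarith) (by linarith [Real.pi_pos])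
  have hBne : ((1 - Real.cos θ)^α : ℝ) ≠ 0 := by rw [h1c]; positivity
  have hC : Complex.sin (θ:ℂ) ≠ 0 := by rw [← Complex.ofReal_sin]; exact_mod_cast hsinθ.ne'
  have hE : Complex.exp (-((α:ℂ) * ((Real.log (2*Real.sin (θ/2)) : ℝ) : ℂ)))
      = ((Real.sin (θ/2)^α / (1 - Real.cos θ)^α : ℝ) : ℂ) := by
    rw [real_coeff α θ h1 h2, Complex.ofReal_exp]
    congr 1
    push_cast
    ring
  rw [hE]
  push_cast
  field_simp
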